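/- Let β̂ minimize β ↦ ‖Y − Xβ‖_n + λΩ(β) over ℝ^p and suppose ‖ε̂‖_n > 0 where ε̂ := Y − Xβ̂. Then β̂ is a global minimizer of this objective if and only if: in the case β̂ = 0, Ω*(ε̂ᵀX/(n‖ε̂‖_n)) ≤ λ; and in the case β̂ ≠ 0, Ω*(ε̂ᵀX/(n‖ε̂‖_n)) = λ and ε̂ᵀXβ̂/(n‖ε̂‖_n) = λΩ(β̂). -/

import Mathlib

open scoped BigOperators

/-- The normalized norm `‖a‖_n = sqrt( (∑ a_j^2) / n )`. -/
noncomputable def normN {n : ℕ} (a : Fin n → ℝ) : ℝ :=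
  Real.sqrt ((∑ j, a j ^ 2) / n)

/-- `Ω` is a norm on `ℝ^p`. -/
def IsNorm {p : ℕ} (Ω : (Fin p → ℝ) → ℝ) : Prop :=
  (∀ x y, Ω (x + y) ≤ Ω x + Ω y) ∧
  (∀ (c : ℝ) (x), Ω (c • x) = |c| * Ω x) ∧
  (∀ x, Ω x = 0 → x = 0)

/-- The dual norm `Ω*(x) = max_{Ω(z) ≤ 1} zᵀx`. -/
noncomputable def dualNorm {p : ℕ} (Ω : (Fin p → ℝ) → ℝ) (x : Fin p → ℝ) : ℝ :=
  sSup {r | ∃ z, Ω z ≤ 1 ∧ r = ∑ i, z i * x i}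

/-- `β_S` : the restriction of `β` to `S`, extended by zero off `S`. -/
def restrict {p : ℕ} (S : Finset (Fin p)) (β : Fin p → ℝ) : Fin p → ℝ :=
  fun i => if i ∈ S then β i else 0

/-- `Ω'` is a norm on the coordinates in `Sᶜ` (definiteness is required only for
vectors vanishing on `S`). -/
def IsNormOn {p : ℕ} (S : Finset (Fin p)) (Ω' : (Fin p → ℝ) → ℝ) : Prop :=
  (∀ x y, Ω' (x + y) ≤ Ω' x + Ω' y) ∧
  (∀ (c : ℝ) (x), Ω' (c • x) = |c| * Ω' x) ∧
  (∀ x, (∀ i ∈ S, x i = 0) → Ω' x = 0 → x = 0)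

/-- `Ω` is weakly decomposable for the (allowed) set `S`, with associated norm `Ωc`
on the coordinates in `Sᶜ`. -/
def WeaklyDecomposable {p : ℕ} (Ω : (Fin p → ℝ) → ℝ) (S : Finset (Fin p))
    (Ωc : (Fin p → ℝ) → ℝ) : Prop :=
  IsNorm Ω ∧ IsNormOn S Ωc ∧
  ∀ β : Fin p → ℝ, Ω (restrict S β) + Ωc (restrict Sᶜ β) ≤ Ω β

/-- The `Ω`-eigenvalue `δ_Ω(L,S)`. -/
noncomputable def omegaEigen {n p : ℕ} (X : Matrix (Fin n) (Fin p) ℝ)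
    (Ω Ωc : (Fin p → ℝ) → ℝ) (S : Finset (Fin p)) (L : ℝ) : ℝ :=
  sInf {r | ∃ β : Fin p → ℝ, Ω (restrict S β) = 1 ∧ Ωc (restrict Sᶜ β) ≤ L ∧
    r = normN (X.mulVec (restrict S β) - X.mulVec (restrict Sᶜ β))}

/-- The `Ω`-effective sparsity `Γ_Ω²(L,S) = 1/δ_Ω²(L,S)`. -/
noncomputable def effSparsity {n p : ℕ} (X : Matrix (Fin n) (Fin p) ℝ)
    (Ω Ωc : (Fin p → ℝ) → ℝ) (S : Finset (Fin p)) (L : ℝ) : ℝ :=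
  1 / (omegaEigen X Ω Ωc S L) ^ 2

/-- KKT conditions for the square root regularization estimator.
For `β̂` with `‖ε̂‖_n > 0` (where `ε̂ = Y - Xβ̂`), `β̂` is a global minimizer of
`β ↦ ‖Y - Xβ‖_n + λΩ(β)` iff the stated dual-norm conditions hold. -/
lemma normN_nonneg {n : ℕ} (a : Fin n → ℝ) : 0 ≤ normN a := Real.sqrt_nonneg _

lemma normN_sq {n : ℕ} (a : Fin n → ℝ) : normN a ^ 2 = (∑ j, a j ^ 2) / n := by
  rcases Nat.eq_zero_or_pos n with h | h
  · subst h; simp [normN]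
  · exact Real.sq_sqrt (by positivity)

lemma omega_zero {p : ℕ} {Ω : (Fin p → ℝ) → ℝ} (hΩ : IsNorm Ω) : Ω 0 = 0 := by
  have := hΩ.2.1 0 0; simpa using this

lemma omega_nonneg {p : ℕ} {Ω : (Fin p → ℝ) → ℝ} (hΩ : IsNorm Ω) (x : Fin p → ℝ) : 0 ≤ Ω x := by
  have h1 := hΩ.1 x (-x)
  have h2 := hΩ.2.1 (-1) x
  simp only [neg_smul, one_smul, abs_neg, abs_one, one_mul] at h2
  have h0 : Ω 0 = 0 := omega_zero hΩ
  simp only [add_neg_cancel, h0] at h1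
  rw [h2] at h1; linarith

lemma omega_neg {p : ℕ} {Ω : (Fin p → ℝ) → ℝ} (hΩ : IsNorm Ω) (x : Fin p → ℝ) : Ω (-x) = Ω x := by
  have h2 := hΩ.2.1 (-1) x
  simpa using h2

lemma omega_pos {p : ℕ} {Ω : (Fin p → ℝ) → ℝ} (hΩ : IsNorm Ω) {x : Fin p → ℝ} (hx : x ≠ 0) :
    0 < Ω x := by
  rcases lt_or_eq_of_le (omega_nonneg hΩ x) with h | h
  · exact h
  · exact absurd (hΩ.2.2 x h.symm) hx

/-- generalized triangle inequality -/

lemma omega_sum_le {p : ℕ} {Ω : (Fin p → ℝ) → ℝ} (hΩ : IsNorm Ω) {ι : Type*} (s : Finset ι)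
    (f : ι → Fin p → ℝ) : Ω (∑ i ∈ s, f i) ≤ ∑ i ∈ s, Ω (f i) := by
  classical
  induction s using Finset.induction with
  | empty => simp [omega_zero hΩ]
  | insert a s hi ih =>
    rw [Finset.sum_insert hi, Finset.sum_insert hi]
    exact le_trans (hΩ.1 _ _) (by linarith)

lemma sqrt_le_add {r b : ℝ} (hr : 0 < r) (hb : 0 ≤ r^2 + b) :
    Real.sqrt (r^2 + b) ≤ r + b/(2*r) := by
  have h1 : r^2 + b ≤ (r + b/(2*r))^2 := by
    have : (r + b/(2*r))^2 = r^2 + b + (b/(2*r))^2 := by field_simp; ring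
    nlinarith [sq_nonneg (b/(2*r))]
  have h2 : 0 ≤ r + b/(2*r) := by
    rcases le_or_gt 0 b with h | h
    · positivity
    · have : b/(2*r) ≥ -r := by rw [ge_iff_le, neg_le, ← neg_div, div_le_iff₀ (by linarith)]; nlinarith
      linarith
  calc Real.sqrt (r^2 + b) ≤ Real.sqrt ((r + b/(2*r))^2) := Real.sqrt_le_sqrt h1
    _ = r + b/(2*r) := Real.sqrt_sq h2

lemma cauchy {n : ℕ} (a b : Fin n → ℝ) : (∑ j, a j * b j) / n ≤ normN a * normN b := by
  rcases Nat.eq_zero_or_pos n with h | h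
  · subst h; simp [normN]
  · have hcs := Finset.sum_mul_sq_le_sq_mul_sq Finset.univ a b
    have hn : (0:ℝ) < n := by exact_mod_cast h
    rw [div_le_iff₀ hn]
    have h1 : normN a * normN b * n = Real.sqrt ((∑ j, a j ^2) * (∑ j, b j ^2)) := by
      rw [normN, normN, ← Real.sqrt_mul (by positivity)]
      rw [show (∑ j, a j ^ 2) / ↑n * ((∑ j, b j ^ 2) / ↑n) = (∑ j, a j ^2) * (∑ j, b j ^2) / (n^2) by ring]
      rw [Real.sqrt_div (by positivity), Real.sqrt_sq hn.le, div_mul_cancel₀]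
      exact hn.ne'
    rw [h1]
    calc (∑ j, a j * b j) ≤ |∑ j, a j * b j| := le_abs_self _
      _ = Real.sqrt ((∑ j, a j * b j)^2) := (Real.sqrt_sq_eq_abs _).symm
      _ ≤ Real.sqrt ((∑ j, a j ^2) * (∑ j, b j ^2)) := Real.sqrt_le_sqrt hcs

lemma omega_le_norm {p : ℕ} {Ω : (Fin p → ℝ) → ℝ} (hΩ : IsNorm Ω) :
    ∃ M : ℝ, 0 ≤ M ∧ ∀ x, Ω x ≤ M * ‖x‖ := by
  set e : Fin p → Fin p → ℝ := fun i => Pi.single i 1 with he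
  refine ⟨∑ i, Ω (e i), Finset.sum_nonneg fun i _ => omega_nonneg hΩ _, fun x => ?_⟩
  have hx : x = ∑ i, x i • e i := by
    funext j
    simp [he, Finset.sum_apply, Pi.single_apply]
  calc Ω x ≤ ∑ i, Ω (x i • e i) := by
        conv_lhs => rw [hx]
        exact omega_sum_le hΩ _ _
    _ = ∑ i, |x i| * Ω (e i) := Finset.sum_congr rfl fun i _ => hΩ.2.1 _ _
    _ ≤ ∑ i, ‖x‖ * Ω (e i) := by
        refine Finset.sum_le_sum fun i _ => ?_
        exact mul_le_mul_of_nonneg_right (by simpa using norm_le_pi_norm x i) (omega_nonneg hΩ _)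
    _ = (∑ i, Ω (e i)) * ‖x‖ := by
        rw [Finset.sum_mul]
        exact Finset.sum_congr rfl fun i _ => mul_comm _ _

lemma omega_continuous {p : ℕ} {Ω : (Fin p → ℝ) → ℝ} (hΩ : IsNorm Ω) : Continuous Ω := by
  obtain ⟨M, hM0, hM⟩ := omega_le_norm hΩ
  refine Metric.continuous_iff.mpr fun x εp hεp => ?_
  rcases eq_or_lt_of_le hM0 with hM0' | hM0'
  · refine ⟨1, one_pos, fun y _ => ?_⟩
    have h1 : Ω y = 0 := le_antisymm (by simpa [← hM0'] using hM y) (omega_nonneg hΩ y)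
    have h2 : Ω x = 0 := le_antisymm (by simpa [← hM0'] using hM x) (omega_nonneg hΩ x)
    simpa [Real.dist_eq, h1, h2] using hεp
  · refine ⟨εp / M, by positivity, fun y hy => ?_⟩
    have key : ∀ a b : Fin p → ℝ, Ω a - Ω b ≤ M * ‖a - b‖ := by
      intro a b
      have := hΩ.1 b (a - b)
      simp only [add_sub_cancel] at this
      have h2 := hM (a - b)
      linarith
    have h1 := key y x
    have h2 := key x y
    rw [show x - y = -(y - x) by abel, norm_neg] at h2
    rw [Real.dist_eq, abs_sub_lt_iff]
    rw [dist_eq_norm] at hy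
    have : M * ‖y - x‖ < M * (εp / M) := by
      exact mul_lt_mul_of_pos_left hy hM0'
    rw [mul_div_cancel₀ _ hM0'.ne'] at this
    constructor <;> linarith

lemma omega_lower {p : ℕ} {Ω : (Fin p → ℝ) → ℝ} (hΩ : IsNorm Ω) :
    ∃ c : ℝ, 0 < c ∧ ∀ z : Fin p → ℝ, c * ‖z‖ ≤ Ω z := by
  rcases Nat.eq_zero_or_pos p with hp | hp
  · refine ⟨1, one_pos, fun z => ?_⟩
    have : z = 0 := by subst hp; exact funext fun i => absurd i.2 (by omega)
    simp [this, omega_zero hΩ]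
  · haveI : Nonempty (Fin p) := ⟨⟨0, hp⟩⟩
    have hne : (Metric.sphere (0 : Fin p → ℝ) 1).Nonempty :=
      NormedSpace.sphere_nonempty.mpr zero_le_one
    obtain ⟨z₀, hz₀S, hminz⟩ := (isCompact_sphere (0 : Fin p → ℝ) 1).exists_isMinOn hne
      (omega_continuous hΩ).continuousOn
    have hz₀norm : ‖z₀‖ = 1 := by simpa using mem_sphere_zero_iff_norm.mp hz₀S
    have hz₀ne : z₀ ≠ 0 := by intro h; rw [h] at hz₀norm; simp at hz₀norm
    refine ⟨Ω z₀, omega_pos hΩ hz₀ne, fun z => ?_⟩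
    rcases eq_or_ne z 0 with rfl | hz
    · simp [omega_zero hΩ]
    · have hznorm : (0:ℝ) < ‖z‖ := norm_pos_iff.mpr hz
      have hmem : ‖z‖⁻¹ • z ∈ Metric.sphere (0 : Fin p → ℝ) 1 := by
        rw [mem_sphere_zero_iff_norm, norm_smul, norm_inv, norm_norm,
          inv_mul_cancel₀ hznorm.ne']
      have h1 : Ω z₀ ≤ Ω (‖z‖⁻¹ • z) := hminz hmem
      have h2 : Ω (‖z‖⁻¹ • z) = ‖z‖⁻¹ * Ω z := by
        rw [hΩ.2.1, abs_of_pos (by positivity)]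
      rw [h2] at h1
      calc Ω z₀ * ‖z‖ ≤ (‖z‖⁻¹ * Ω z) * ‖z‖ := mul_le_mul_of_nonneg_right h1 hznorm.le
        _ = Ω z := by field_simp

lemma dual_bdd {p : ℕ} {Ω : (Fin p → ℝ) → ℝ} (hΩ : IsNorm Ω) (v : Fin p → ℝ) :
    BddAbove {r | ∃ z, Ω z ≤ 1 ∧ r = ∑ i, z i * v i} := by
  obtain ⟨c, hc, hlow⟩ := omega_lower hΩ
  refine ⟨c⁻¹ * ∑ i, |v i|, fun x hx => ?_⟩
  obtain ⟨z, hz1, rfl⟩ := hx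
  have hznorm : ‖z‖ ≤ c⁻¹ := by
    rw [← one_div, le_div_iff₀ hc, mul_comm]
    exact le_trans (hlow z) hz1
  calc ∑ i, z i * v i ≤ ∑ i, |z i| * |v i| := by
        refine Finset.sum_le_sum fun i _ => ?_
        calc z i * v i ≤ |z i * v i| := le_abs_self _
          _ = |z i| * |v i| := abs_mul _ _
    _ ≤ ∑ i, c⁻¹ * |v i| := by
        refine Finset.sum_le_sum fun i _ => ?_
        exact mul_le_mul_of_nonneg_right
          (le_trans (by simpa using norm_le_pi_norm z i) hznorm) (abs_nonneg _)
    _ = c⁻¹ * ∑ i, |v i| := by rw [Finset.mul_sum]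

lemma small_t {a C : ℝ} (hC : 0 ≤ C) (h : ∀ t : ℝ, 0 < t → t ≤ 1 → a ≤ t * C) : a ≤ 0 := by
  by_contra hcon
  push_neg at hcon
  rcases eq_or_lt_of_le hC with hC0 | hC0
  · have := h 1 one_pos le_rfl
    rw [← hC0] at this; simp at this; linarith
  · have ht : 0 < min 1 (a / (2 * C)) := lt_min one_pos (by positivity)
    have := h _ ht (min_le_left _ _)
    have h2 : min 1 (a / (2 * C)) * C ≤ (a / (2 * C)) * C :=
      mul_le_mul_of_nonneg_right (min_le_right _ _) hC
    have h3 : (a / (2 * C)) * C = a / 2 := by field_simp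
    linarith

lemma normN_sub_le {n : ℕ} (e u : Fin n → ℝ) (he : 0 < normN e) (t : ℝ) :
    normN (e - t • u) ≤ normN e +
      ((-2*t*(∑ j, e j * u j) + t^2 * ∑ j, u j ^2)/n) / (2 * normN e) := by
  set r := normN e with hr
  set B : ℝ := (-2*t*(∑ j, e j * u j) + t^2 * ∑ j, u j ^2)/n with hB
  have hkey : (∑ j, (e - t • u) j ^ 2) / n = r^2 + B := by
    have h1 : ∀ j : Fin n, (e - t • u) j ^2 = e j ^2 + (-2*t*(e j * u j) + t^2 * u j ^2) := by
      intro j; simp only [Pi.sub_apply, Pi.smul_apply, smul_eq_mul]; ring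
    rw [Finset.sum_congr rfl fun j _ => h1 j, Finset.sum_add_distrib]
    rw [normN_sq, hB, add_div]
    congr 1
    rw [Finset.sum_add_distrib, ← Finset.mul_sum, ← Finset.mul_sum]
  have hnonneg : 0 ≤ r^2 + B := by
    rw [← hkey]; positivity
  calc normN (e - t • u) = Real.sqrt (r^2 + B) := by rw [normN, hkey]
    _ ≤ r + B/(2*r) := sqrt_le_add he hnonneg

theorem kkt_conditions {n p : ℕ} (Y : Fin n → ℝ) (X : Matrix (Fin n) (Fin p) ℝ)
    (Ω : (Fin p → ℝ) → ℝ) (hΩ : IsNorm Ω) (lam : ℝ) (hlam : 0 < lam)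
    (bh : Fin p → ℝ) (hres : 0 < normN (Y - X.mulVec bh)) :
    (∀ β : Fin p → ℝ,
        normN (Y - X.mulVec bh) + lam * Ω bh ≤ normN (Y - X.mulVec β) + lam * Ω β)
    ↔ ((bh = 0 →
          dualNorm Ω (fun j => Matrix.vecMul (Y - X.mulVec bh) X j
              / (n * normN (Y - X.mulVec bh))) ≤ lam)
        ∧ (bh ≠ 0 →
          dualNorm Ω (fun j => Matrix.vecMul (Y - X.mulVec bh) X j
              / (n * normN (Y - X.mulVec bh))) = lam
          ∧ (∑ j, Matrix.vecMul (Y - X.mulVec bh) X j * bh j)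
              / (n * normN (Y - X.mulVec bh)) = lam * Ω bh)) := by
  have hn : (0:ℝ) < n := by
    rcases Nat.eq_zero_or_pos n with h | h
    · subst h
      simp [normN] at hres
    · exact_mod_cast h
  set ε : Fin n → ℝ := Y - X.mulVec bh with hε
  set r : ℝ := normN ε with hrdef
  set w : Fin p → ℝ := Matrix.vecMul ε X with hw
  have hnr : (0:ℝ) < ↑n * r := by positivity
  have hdot : ∀ z : Fin p → ℝ, ∑ i, ε i * X.mulVec z i = ∑ j, w j * z j := by
    intro z
    simpa [dotProduct] using Matrix.dotProduct_mulVec ε X z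
  have hzv : ∀ z : Fin p → ℝ, (∑ i, z i * (w i / (↑n * r))) = (∑ j, w j * z j) / (↑n * r) := by
    intro z
    rw [Finset.sum_div]
    exact Finset.sum_congr rfl fun i _ => by ring
  constructor
  · intro hmin
    have dir_le : ∀ z : Fin p → ℝ, (∑ j, w j * z j) / (↑n * r) ≤ lam * Ω z := by
      intro z
      have hC : (0:ℝ) ≤ ((∑ j, (X.mulVec z) j ^2)/n) / (2*r) := by positivity
      have key : (∑ j, w j * z j) / (↑n * r) - lam * Ω z ≤ 0 := by
        apply small_t hC
        intro t ht ht1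
        have hmv : Y - X.mulVec (bh + t • z) = ε - t • X.mulVec z := by
          funext i
          simp [Matrix.mulVec_add, Matrix.mulVec_smul, hε]
          ring
        have h1 := hmin (bh + t • z)
        rw [hmv] at h1
        have h2 := normN_sub_le ε (X.mulVec z) hres t
        rw [hdot z] at h2
        have h3 : Ω (bh + t • z) ≤ Ω bh + t * Ω z := by
          calc Ω (bh + t • z) ≤ Ω bh + Ω (t • z) := hΩ.1 _ _
            _ = Ω bh + |t| * Ω z := by rw [hΩ.2.1]
            _ = Ω bh + t * Ω z := by rw [abs_of_pos ht]
        have e1 : (-2*t*(∑ j, w j * z j) + t^2 * ∑ j, (X.mulVec z) j ^2)/(n:ℝ)/(2*r)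
            = -(t*((∑ j, w j * z j)/(↑n*r))) + t*(t*(((∑ j, (X.mulVec z) j ^2)/n) / (2*r))) := by
          field_simp
        rw [e1] at h2
        have h4 : t * ((∑ j, w j * z j)/(↑n*r)) ≤ t * (lam * Ω z)
            + t * (t*(((∑ j, (X.mulVec z) j ^2)/n) / (2*r))) := by
          nlinarith [h1, h2, h3, hlam.le]
        have h5 := (mul_le_mul_iff_right₀ ht).mp (by linarith [h4] :
          t * ((∑ j, w j * z j)/(↑n*r)) ≤ t * ((lam * Ω z) + t*(((∑ j, (X.mulVec z) j ^2)/n) / (2*r))))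
        linarith
      linarith
    have hbh_ge : lam * Ω bh ≤ (∑ j, w j * bh j) / (↑n * r) := by
      have hC : (0:ℝ) ≤ ((∑ j, (X.mulVec bh) j ^2)/n) / (2*r) := by positivity
      have key : lam * Ω bh - (∑ j, w j * bh j) / (↑n * r) ≤ 0 := by
        apply small_t hC
        intro t ht ht1
        have hmv : Y - X.mulVec ((1-t) • bh) = ε - (-t) • X.mulVec bh := by
          funext i
          simp [Matrix.mulVec_smul, hε]
          ring
        have h1 := hmin ((1-t) • bh)
        rw [hmv] at h1
        have h2 := normN_sub_le ε (X.mulVec bh) hres (-t)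
        rw [hdot bh] at h2
        have h3 : Ω ((1-t) • bh) = Ω bh - t * Ω bh := by
          rw [hΩ.2.1, abs_of_nonneg (by linarith : (0:ℝ) ≤ 1 - t)]
          ring
        rw [h3] at h1
        have e1 : (-2*(-t)*(∑ j, w j * bh j) + (-t)^2 * ∑ j, (X.mulVec bh) j ^2)/(n:ℝ)/(2*r)
            = t*((∑ j, w j * bh j)/(↑n*r)) + t*(t*(((∑ j, (X.mulVec bh) j ^2)/n) / (2*r))) := by
          field_simp
        rw [e1] at h2
        have h4 : t * (lam * Ω bh) ≤ t * ((∑ j, w j * bh j)/(↑n*r))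
            + t * (t*(((∑ j, (X.mulVec bh) j ^2)/n) / (2*r))) := by
          nlinarith [h1, h2]
        have h5 := (mul_le_mul_iff_right₀ ht).mp (by linarith [h4] :
          t * (lam * Ω bh) ≤ t * (((∑ j, w j * bh j)/(↑n*r)) + t*(((∑ j, (X.mulVec bh) j ^2)/n) / (2*r))))
        linarith
      linarith
    have heq : (∑ j, w j * bh j) / (↑n * r) = lam * Ω bh :=
      le_antisymm (dir_le bh) hbh_ge
    have hdual_le : dualNorm Ω (fun j => w j / (↑n * r)) ≤ lam := by
      apply Real.sSup_le _ hlam.le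
      rintro x ⟨z, hz1, rfl⟩
      rw [hzv z]
      calc (∑ j, w j * z j) / (↑n * r) ≤ lam * Ω z := dir_le z
        _ ≤ lam * 1 := mul_le_mul_of_nonneg_left hz1 hlam.le
        _ = lam := mul_one lam
    refine ⟨fun _ => hdual_le, fun hbh => ⟨?_, heq⟩⟩
    refine le_antisymm hdual_le ?_
    have hΩbh : 0 < Ω bh := omega_pos hΩ hbh
    have hmem : lam ∈ {x | ∃ z, Ω z ≤ 1 ∧ x = ∑ i, z i * (w i / (↑n * r))} := by
      refine ⟨(Ω bh)⁻¹ • bh, ?_, ?_⟩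
      · rw [hΩ.2.1, abs_of_pos (inv_pos.mpr hΩbh), inv_mul_cancel₀ hΩbh.ne']
      · have h1 : (∑ i, ((Ω bh)⁻¹ • bh) i * (w i / (↑n * r)))
            = (Ω bh)⁻¹ * (∑ i, bh i * (w i / (↑n * r))) := by
          rw [Finset.mul_sum]
          exact Finset.sum_congr rfl fun i _ => by simp; ring
        rw [h1, hzv bh, heq]
        field_simp
    exact le_csSup (dual_bdd hΩ _) hmem
  · rintro ⟨h0, h1⟩
    have heq : (∑ j, w j * bh j) / (↑n * r) = lam * Ω bh := by
      rcases eq_or_ne bh 0 with hbh | hbh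
      · simp [hbh, omega_zero hΩ]
      · exact (h1 hbh).2
    have hdual : dualNorm Ω (fun j => w j / (↑n * r)) ≤ lam := by
      rcases eq_or_ne bh 0 with hbh | hbh
      · exact h0 hbh
      · exact le_of_eq (h1 hbh).1
    have hforall : ∀ β : Fin p → ℝ, (∑ j, w j * β j) / (↑n * r) ≤ lam * Ω β := by
      intro β
      rcases eq_or_ne β 0 with hβ | hβ
      · simp [hβ, omega_zero hΩ]
      · have hc : 0 < Ω β := omega_pos hΩ hβ
        have hmem : (∑ i, ((Ω β)⁻¹ • β) i * (w i / (↑n * r)))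
            ∈ {x | ∃ z, Ω z ≤ 1 ∧ x = ∑ i, z i * (w i / (↑n * r))} := by
          refine ⟨(Ω β)⁻¹ • β, le_of_eq ?_, rfl⟩
          rw [hΩ.2.1, abs_of_pos (inv_pos.mpr hc), inv_mul_cancel₀ hc.ne']
        have hle := le_trans (le_csSup (dual_bdd hΩ _) hmem) hdual
        have h2 : (∑ i, ((Ω β)⁻¹ • β) i * (w i / (↑n * r)))
            = (Ω β)⁻¹ * ((∑ j, w j * β j) / (↑n * r)) := by
          rw [← hzv β, Finset.mul_sum]
          exact Finset.sum_congr rfl fun i _ => by simp; ring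
        rw [h2] at hle
        calc (∑ j, w j * β j) / (↑n * r)
            = Ω β * ((Ω β)⁻¹ * ((∑ j, w j * β j) / (↑n * r))) := by
              rw [mul_inv_cancel_left₀ hc.ne']
          _ ≤ Ω β * lam := mul_le_mul_of_nonneg_left hle hc.le
          _ = lam * Ω β := mul_comm _ _
    intro β
    have hcs := cauchy ε (Y - X.mulVec β)
    have hεsq : ∑ j, ε j * ε j = ↑n * r^2 := by
      have h0' := normN_sq ε
      have h2 : ∑ j, ε j * ε j = ∑ j, ε j ^2 := Finset.sum_congr rfl fun j _ => (sq (ε j)).symm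
      rw [h2]
      field_simp at h0' ⊢
      linarith [h0']
    have hsplit : ∑ j, ε j * (Y - X.mulVec β) j
        = ↑n * r^2 + (∑ j, w j * bh j) - (∑ j, w j * β j) := by
      have hd : Y - X.mulVec β = ε + (X.mulVec bh - X.mulVec β) := by
        funext i
        simp [hε]
      have h3 : ∑ j, ε j * (Y - X.mulVec β) j
          = (∑ j, ε j * ε j) + (∑ j, ε j * X.mulVec bh j) - (∑ j, ε j * X.mulVec β j) := by
        rw [hd]
        rw [← Finset.sum_add_distrib, ← Finset.sum_sub_distrib]
        exact Finset.sum_congr rfl fun j _ => by simp; ring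
      rw [h3, hεsq, hdot bh, hdot β]
    rw [hsplit] at hcs
    have hN : (↑n * r^2 + (∑ j, w j * bh j) - (∑ j, w j * β j)) / (↑n * r)
        ≤ normN (Y - X.mulVec β) := by
      rw [div_le_iff₀ hnr]
      calc ↑n * r^2 + (∑ j, w j * bh j) - (∑ j, w j * β j)
          ≤ ↑n * (r * normN (Y - X.mulVec β)) := by
            rw [div_le_iff₀ hn] at hcs
            linarith [hcs]
        _ = normN (Y - X.mulVec β) * (↑n * r) := by ring
    have hsplit2 : (↑n * r^2 + (∑ j, w j * bh j) - (∑ j, w j * β j)) / (↑n * r)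
        = r + (∑ j, w j * bh j) / (↑n * r) - (∑ j, w j * β j) / (↑n * r) := by
      field_simp
    rw [hsplit2] at hN
    have h6 := hforall β
    linarith [hN, heq, h6]
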